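/- Let s be a nonzero real polynomial (the symbol of a constant-coefficient operator A) and let α, β ∈ ℝ. Suppose that for every positive integer n, (24·n⁴·β − 6·n²·α)·s(n) = (6·n⁴·β − 6·n²·α)·s(2n). Then: if β ≠ 0, the degree of s equals 2; and if β = 0 and α ≠ 0, then s is constant (degree 0). Consequently, the only constant-coefficient invertible operators A whose Euler vector field is bi-Hamiltonian with respect to a modified Lie-Poisson structure α(D) + βD³ have symbol of the form a − b·ξ², i.e. A = aI + bD². -/
import Mathlib


/-- The symbol computation in the proof that only `A = aI + bD²` gives a
bi-Hamiltonian Euler field: if a nonzero real polynomial `s` satisfies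
`(24n⁴β − 6n²α)·s(n) = (6n⁴β − 6n²α)·s(2n)` for all positive integers `n`,
then `s` has degree `2` when `β ≠ 0`, and `s` is constant when `β = 0` and `α ≠ 0`. -/
theorem symbol_degree_constraint (s : Polynomial ℝ) (hs : s ≠ 0) (α β : ℝ)
    (h : ∀ n : ℕ, 0 < n →
      (24 * (n : ℝ) ^ 4 * β - 6 * (n : ℝ) ^ 2 * α) * s.eval (n : ℝ)
        = (6 * (n : ℝ) ^ 4 * β - 6 * (n : ℝ) ^ 2 * α) * s.eval (2 * (n : ℝ))) :
    (β ≠ 0 → s.natDegree = 2) ∧ (β = 0 → α ≠ 0 → s.natDegree = 0) := by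
  classical
  set d := s.natDegree with hd
  set c := s.leadingCoeff with hc
  have hc0 : c ≠ 0 := Polynomial.leadingCoeff_ne_zero.mpr hs
  set t := s.comp (Polynomial.C 2 * Polynomial.X) with ht
  have hq : (Polynomial.C 2 * Polynomial.X : Polynomial ℝ).natDegree = 1 :=
    Polynomial.natDegree_C_mul_X 2 (by norm_num)
  have htd : t.natDegree = d := by
    rw [ht, Polynomial.natDegree_comp, hq, mul_one]
  have htl : t.leadingCoeff = c * 2 ^ d := by
    have hlc : (Polynomial.C 2 * Polynomial.X : Polynomial ℝ).leadingCoeff = 2 := by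
      rw [Polynomial.leadingCoeff_mul, Polynomial.leadingCoeff_C, Polynomial.leadingCoeff_X, mul_one]
    rw [ht, Polynomial.leadingCoeff_comp (by rw [hq]; norm_num), hlc]
  have hinj : Function.Injective (fun n : ℕ => ((n : ℝ) + 1)) := by
    intro a b hab
    have : (a : ℝ) = (b : ℝ) := by simpa using hab
    exact_mod_cast this
  have hinf : (Set.range fun n : ℕ => ((n : ℝ) + 1)).Infinite :=
    Set.infinite_range_of_injective hinj
  have hsd : s.coeff d = c := rfl
  have htc : t.coeff d = c * 2 ^ d := by
    have h0 : t.coeff t.natDegree = t.leadingCoeff := rfl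
    rw [htd] at h0
    rw [h0, htl]
  have hs2 : s.coeff (d + 2) = 0 :=
    Polynomial.coeff_eq_zero_of_natDegree_lt (by omega)
  have ht2 : t.coeff (d + 2) = 0 :=
    Polynomial.coeff_eq_zero_of_natDegree_lt (by omega)
  constructor
  · intro hβ
    have hPQ : (Polynomial.C (24 * β) * (Polynomial.X ^ 4 * s)
          - Polynomial.C (6 * α) * (Polynomial.X ^ 2 * s))
        = (Polynomial.C (6 * β) * (Polynomial.X ^ 4 * t)
          - Polynomial.C (6 * α) * (Polynomial.X ^ 2 * t)) := by
      apply Polynomial.eq_of_infinite_eval_eq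
      refine hinf.mono ?_
      rintro x ⟨n, rfl⟩
      have hn := h (n + 1) (Nat.succ_pos n)
      push_cast at hn
      simp only [Set.mem_setOf_eq, Polynomial.eval_sub, Polynomial.eval_mul,
        Polynomial.eval_C, Polynomial.eval_pow, Polynomial.eval_X, ht,
        Polynomial.eval_comp]
      linear_combination hn
    have key := congrArg (fun p => Polynomial.coeff p (d + 4)) hPQ
    simp only [Polynomial.coeff_sub, Polynomial.coeff_C_mul] at key
    have e1 : (Polynomial.X ^ 4 * s).coeff (d + 4) = s.coeff d :=
      Polynomial.coeff_X_pow_mul s 4 d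
    have e2 : (Polynomial.X ^ 2 * s).coeff (d + 4) = s.coeff (d + 2) := by
      have := Polynomial.coeff_X_pow_mul s 2 (d + 2)
      simpa [add_assoc] using this
    have e3 : (Polynomial.X ^ 4 * t).coeff (d + 4) = t.coeff d :=
      Polynomial.coeff_X_pow_mul t 4 d
    have e4 : (Polynomial.X ^ 2 * t).coeff (d + 4) = t.coeff (d + 2) := by
      have := Polynomial.coeff_X_pow_mul t 2 (d + 2)
      simpa [add_assoc] using this
    rw [e1, e2, e3, e4, hsd, htc, hs2, ht2] at key
    -- key : 24 * β * c - 6 * α * 0 = 6 * β * (c * 2 ^ d) - 6 * α * 0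
    have hpow : (2 : ℝ) ^ d = 4 := by
      have h5 : (6 * β * c) * ((2 : ℝ) ^ d - 4) = 0 := by linear_combination -key
      rcases mul_eq_zero.mp h5 with h6 | h6
      · exact absurd h6 (mul_ne_zero (mul_ne_zero (by norm_num) hβ) hc0)
      · linarith
    have hpow' : (2 : ℕ) ^ d = 2 ^ 2 := by
      have : ((2 : ℕ) ^ d : ℝ) = ((2 : ℕ) ^ 2 : ℝ) := by push_cast; rw [hpow]; norm_num
      exact_mod_cast this
    exact Nat.pow_right_injective (le_refl 2) hpow'
  · intro hβ hα
    have hst : s = t := by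
      apply Polynomial.eq_of_infinite_eval_eq
      refine hinf.mono ?_
      rintro x ⟨n, rfl⟩
      have hn := h (n + 1) (Nat.succ_pos n)
      rw [hβ] at hn
      push_cast at hn
      have hn2 : ((n : ℝ) + 1) ^ 2 ≠ 0 := by positivity
      have : s.eval ((n : ℝ) + 1) = s.eval (2 * ((n : ℝ) + 1)) := by
        have hn' : (-6 * α * ((n : ℝ) + 1) ^ 2) * s.eval ((n : ℝ) + 1)
            = (-6 * α * ((n : ℝ) + 1) ^ 2) * s.eval (2 * ((n : ℝ) + 1)) := by
          linear_combination hn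
        exact mul_left_cancel₀ (mul_ne_zero (mul_ne_zero (by norm_num) hα) hn2) hn'
      simp only [Set.mem_setOf_eq, ht, Polynomial.eval_comp, Polynomial.eval_mul,
        Polynomial.eval_C, Polynomial.eval_X]
      exact this
    have : c = c * 2 ^ d := by
      conv_lhs => rw [← hsd]
      rw [hst]
      exact htc
    have hpow : (2 : ℝ) ^ d = 1 := by
      have h5 : c * ((2 : ℝ) ^ d - 1) = 0 := by linear_combination -this
      rcases mul_eq_zero.mp h5 with h6 | h6
      · exact absurd h6 hc0
      · linarith
    have hpow' : (2 : ℕ) ^ d = 2 ^ 0 := by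
      have : ((2 : ℕ) ^ d : ℝ) = ((2 : ℕ) ^ 0 : ℝ) := by push_cast; rw [hpow]; norm_num
      exact_mod_cast this
    exact Nat.pow_right_injective (le_refl 2) hpow'
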